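/- Let D be a design of strength R−1 (R ≥ 2) with n ≥ R factors, each factor given a normalized orthogonal coding. Let U be an R-element set of factors and s_min = min_{i∈U} s i. If i, j ∈ U are two factors with s i = s j = s_min, then factor i is completely confounded by the factors in U ∖ {i} if and only if factor j is completely confounded by the factors in U ∖ {j}. -/

import Mathlib

open Finset Matrix

/-- A design `D` (rows = runs, coordinates = factors) has strength `t` if in every
projection onto `t` factors every level combination occurs equally often. -/
def hasStrength {N n : ℕ} (s : Fin n → ℕ) (D : Fin N → ∀ i, Fin (s i)) (t : ℕ) : Prop :=
  ∀ T : Finset (Fin n), T.card = t → ∀ x : ∀ i, Fin (s i),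
    (Finset.univ.filter fun r => ∀ i ∈ T, D r i = x i).card = N / ∏ i ∈ T, s i

/-- Normalized orthogonal coding: contrast columns have zero sum and
`Cᵀ C = m • 1` (squared length `m`, pairwise orthogonal). -/
def isNOC {m : ℕ} (C : Fin m → Fin (m - 1) → ℝ) : Prop :=
  (∀ j, ∑ l, C l j = 0) ∧
    ∀ j j', ∑ l, C l j * C l j' = if j = j' then (m : ℝ) else 0

/-- Column (indexed by the tuple `j`) of the interaction model matrix of the set `U`
of factors, evaluated at run `r`. -/
def intCol {N n : ℕ} {s : Fin n → ℕ} (C : ∀ i, Fin (s i) → Fin (s i - 1) → ℝ)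
    (D : Fin N → ∀ i, Fin (s i)) (U : Finset (Fin n))
    (j : ∀ i : U, Fin (s i.1 - 1)) (r : Fin N) : ℝ :=
  ∏ i : U, C i.1 (D r i.1) (j i)

/-- Projection frequency `a_k(U)`: sum of squared column sums of the interaction
model matrix of `U`, divided by `N²`. -/
noncomputable def projFreq {N n : ℕ} {s : Fin n → ℕ}
    (C : ∀ i, Fin (s i) → Fin (s i - 1) → ℝ)
    (D : Fin N → ∀ i, Fin (s i)) (U : Finset (Fin n)) : ℝ :=
  (∑ j : ∀ i : U, Fin (s i.1 - 1), (∑ r, intCol C D U j r) ^ 2) / (N : ℝ) ^ 2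

/-- The set of columns of the full model matrix `F_C` of a set `Cset` of factors:
the all-ones column together with all columns of the interaction model matrices
of all nonempty subsets of `Cset`. -/
def fullCols {N n : ℕ} {s : Fin n → ℕ} (C : ∀ i, Fin (s i) → Fin (s i - 1) → ℝ)
    (D : Fin N → ∀ i, Fin (s i)) (Cset : Finset (Fin n)) : Set (Fin N → ℝ) :=
  {(fun _ => 1 : Fin N → ℝ)} ∪
    {v | ∃ S : Finset (Fin n), S ⊆ Cset ∧ S.Nonempty ∧
      ∃ j : ∀ i : S, Fin (s i.1 - 1), v = fun r => intCol C D S j r}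

/-- Factor `c` is completely confounded by the factors in `Cset` if every column of
its main-effects model matrix lies in the span of the columns of `F_Cset`. -/
def confounded {N n : ℕ} {s : Fin n → ℕ} (C : ∀ i, Fin (s i) → Fin (s i - 1) → ℝ)
    (D : Fin N → ∀ i, Fin (s i)) (c : Fin n) (Cset : Finset (Fin n)) : Prop :=
  ∀ j : Fin (s c - 1), (fun r => C c (D r c) j) ∈ Submodule.span ℝ (fullCols C D Cset)

section AuxStatement3
variable {N n R : ℕ} {s : Fin n → ℕ}

/-- Extend a tuple of levels on `T` to a full tuple. -/
def extL (hs : ∀ i, 2 ≤ s i) (T : Finset (Fin n)) (z : ∀ k : T, Fin (s k.1))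
    (i : Fin n) : Fin (s i) :=
  if h : i ∈ T then z ⟨i, h⟩ else ⟨0, by have := hs i; omega⟩

lemma filter_restrict_eq (hs : ∀ i, 2 ≤ s i) (D : Fin N → ∀ i, Fin (s i))
    (T : Finset (Fin n)) (z : ∀ k : T, Fin (s k.1)) :
    (Finset.univ.filter fun r : Fin N => (fun k : T => D r k.1) = z) =
      Finset.univ.filter fun r => ∀ i ∈ T, D r i = extL hs T z i := by
  apply Finset.filter_congr
  intro r _
  constructor
  · intro h i hi
    have := congrFun h ⟨i, hi⟩
    simpa [extL, dif_pos hi] using this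
  · intro h
    funext k
    have := h k.1 k.2
    simpa [extL, dif_pos k.2] using this

lemma prod_dvd (hs : ∀ i, 2 ≤ s i) (D : Fin N → ∀ i, Fin (s i)) {t : ℕ}
    (hD : hasStrength s D t) (T : Finset (Fin n)) (hT : T.card = t) :
    (∏ i ∈ T, s i) ∣ N := by
  classical
  have hcard : N = ∑ z : (∀ k : T, Fin (s k.1)),
      (Finset.univ.filter fun r : Fin N => (fun k : T => D r k.1) = z).card := by
    simpa using Finset.card_eq_sum_card_fiberwise
      (f := fun r : Fin N => (fun k : T => D r k.1)) (s := Finset.univ)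
      (t := Finset.univ) (fun r _ => Finset.mem_univ _)
  have hval : ∀ z : (∀ k : T, Fin (s k.1)),
      (Finset.univ.filter fun r : Fin N => (fun k : T => D r k.1) = z).card
        = N / ∏ i ∈ T, s i := by
    intro z
    rw [filter_restrict_eq hs D T z]
    exact hD T hT (extL hs T z)
  rw [Finset.sum_congr rfl (fun z _ => hval z), Finset.sum_const] at hcard
  have hcardpi : Fintype.card (∀ k : T, Fin (s k.1)) = ∏ i ∈ T, s i := by
    rw [Fintype.card_pi]
    simp only [Fintype.card_fin]
    exact Finset.prod_attach T fun i => s i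
  rw [Finset.card_univ, hcardpi, smul_eq_mul] at hcard
  exact Dvd.intro _ hcard.symm

end AuxStatement3

section AuxStatement3b
variable {N n R : ℕ} {s : Fin n → ℕ}

lemma strength_le (hs : ∀ i, 2 ≤ s i) (D : Fin N → ∀ i, Fin (s i)) {t : ℕ}
    (hD : hasStrength s D t) (hn : t ≤ n)
    (T : Finset (Fin n)) (hT : T.card ≤ t) (x : ∀ i, Fin (s i)) :
    (Finset.univ.filter fun r => ∀ i ∈ T, D r i = x i).card = N / ∏ i ∈ T, s i := by
  classical
  obtain ⟨T', hTT', -, hT'⟩ := Finset.exists_subsuperset_card_eq (Finset.subset_univ T)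
    hT (by simpa using hn)
  set A := Finset.univ.filter fun r : Fin N => ∀ i ∈ T, D r i = x i with hA
  have hsplit : A.card = ∑ z : (∀ k : (T' \ T : Finset (Fin n)), Fin (s k.1)),
      (A.filter fun r : Fin N => (fun k : (T' \ T : Finset (Fin n)) => D r k.1) = z).card :=
    Finset.card_eq_sum_card_fiberwise (fun r _ => Finset.mem_univ _)
  have hval : ∀ z : (∀ k : (T' \ T : Finset (Fin n)), Fin (s k.1)),
      (A.filter fun r : Fin N => (fun k : (T' \ T : Finset (Fin n)) => D r k.1) = z).card
        = N / ∏ i ∈ T', s i := by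
    intro z
    set x' : ∀ i, Fin (s i) := fun i => if h : i ∈ T' \ T then z ⟨i, h⟩ else x i with hx'
    have : (A.filter fun r : Fin N => (fun k : (T' \ T : Finset (Fin n)) => D r k.1) = z)
        = Finset.univ.filter fun r => ∀ i ∈ T', D r i = x' i := by
      rw [hA, Finset.filter_filter]
      apply Finset.filter_congr
      intro r _
      constructor
      · rintro ⟨h1, h2⟩ i hi
        simp only [hx']
        by_cases hmem : i ∈ T' \ T
        · rw [dif_pos hmem]
          exact congrFun h2 ⟨i, hmem⟩
        · have hiT : i ∈ T := by
            by_contra hiT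
            exact hmem (Finset.mem_sdiff.mpr ⟨hi, hiT⟩)
          rw [dif_neg hmem]
          exact h1 i hiT
      · intro h
        constructor
        · intro i hi
          have hmem : i ∉ T' \ T := by simp [hi]
          have := h i (hTT' hi)
          rw [hx'] at this
          simpa only [dif_neg hmem] using this
        · funext k
          have := h k.1 (Finset.mem_sdiff.mp k.2).1
          rw [hx'] at this
          simpa only [dif_pos k.2] using this
    rw [this]
    exact hD T' hT' x'
  rw [Finset.sum_congr rfl (fun z _ => hval z), Finset.sum_const, Finset.card_univ] at hsplit
  have hcardpi : Fintype.card (∀ k : (T' \ T : Finset (Fin n)), Fin (s k.1))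
      = ∏ i ∈ T' \ T, s i := by
    rw [Fintype.card_pi]
    simp only [Fintype.card_fin]
    exact Finset.prod_attach _ fun i => s i
  obtain ⟨m, hm⟩ := prod_dvd hs D hD T' hT'
  have hposT : 0 < ∏ i ∈ T, s i := Finset.prod_pos fun i _ => by have := hs i; omega
  have hposT'T : 0 < ∏ i ∈ T' \ T, s i := Finset.prod_pos fun i _ => by have := hs i; omega
  have hprodsplit : ∏ i ∈ T', s i = (∏ i ∈ T' \ T, s i) * ∏ i ∈ T, s i :=
    (Finset.prod_sdiff hTT').symm
  rw [hsplit, hcardpi, smul_eq_mul, hm, hprodsplit]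
  rw [Nat.mul_div_cancel_left _ (by positivity)]
  have h2 : (∏ i ∈ T' \ T, s i) * (∏ i ∈ T, s i) * m
      = ((∏ i ∈ T' \ T, s i) * m) * ∏ i ∈ T, s i := by ring
  rw [h2, Nat.mul_div_cancel _ hposT]

lemma sum_runs (hs : ∀ i, 2 ≤ s i) (D : Fin N → ∀ i, Fin (s i)) {t : ℕ}
    (hD : hasStrength s D t) (hn : t ≤ n)
    (T : Finset (Fin n)) (hT : T.card ≤ t) (g : (∀ k : T, Fin (s k.1)) → ℝ) :
    ∑ r, g (fun k => D r k.1)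
      = ((N / ∏ i ∈ T, s i : ℕ) : ℝ) * ∑ z : (∀ k : T, Fin (s k.1)), g z := by
  classical
  rw [← Finset.sum_fiberwise_of_maps_to
    (g := fun r : Fin N => (fun k : T => D r k.1)) (fun r _ => Finset.mem_univ _)]
  rw [Finset.mul_sum]
  apply Finset.sum_congr rfl
  intro z _
  have : ∀ r ∈ Finset.univ.filter fun r : Fin N => (fun k : T => D r k.1) = z,
      g (fun k => D r k.1) = g z := by
    intro r hr
    rw [(Finset.mem_filter.mp hr).2]
  rw [Finset.sum_congr rfl this, Finset.sum_const, filter_restrict_eq hs D T z,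
    strength_le hs D hD hn T hT]
  simp [mul_comm]

end AuxStatement3b

section AuxStatement3c
variable {N n R : ℕ} {s : Fin n → ℕ}

/-- Extend a tuple of contrast indices on `S` to a full tuple. -/
def extT (hs : ∀ i, 2 ≤ s i) (S : Finset (Fin n)) (t : ∀ k : S, Fin (s k.1 - 1))
    (k : Fin n) : Fin (s k - 1) :=
  if h : k ∈ S then t ⟨k, h⟩ else ⟨0, by have := hs k; omega⟩

/-- Product column: product over `S` of coding values picked by a full tuple `J`. -/
def pcol {N n : ℕ} {s : Fin n → ℕ} (C : ∀ i, Fin (s i) → Fin (s i - 1) → ℝ)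
    (D : Fin N → ∀ i, Fin (s i)) (J : ∀ k, Fin (s k - 1)) (S : Finset (Fin n))
    (r : Fin N) : ℝ :=
  ∏ k ∈ S, C k (D r k) (J k)


lemma intCol_pcol (hs : ∀ i, 2 ≤ s i) (D : Fin N → ∀ i, Fin (s i))
    (C : ∀ i, Fin (s i) → Fin (s i - 1) → ℝ) (S : Finset (Fin n)) (t : ∀ k : S, Fin (s k.1 - 1)) (r : Fin N) :
    intCol C D S t r = pcol C D (extT hs S t) S r := by
  unfold intCol pcol
  rw [← Finset.prod_attach S fun k => C k (D r k) (extT hs S t k)]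
  apply Finset.prod_congr rfl
  intro k _
  rw [extT, dif_pos k.2]

lemma sum_prod_eq (hs : ∀ i, 2 ≤ s i) (D : Fin N → ∀ i, Fin (s i)) {t : ℕ} (hD : hasStrength s D t) (hn : t ≤ n)
    (T : Finset (Fin n)) (hT : T.card ≤ t) (h : ∀ k, Fin (s k) → ℝ) :
    ∑ r, ∏ k ∈ T, h k (D r k)
      = ((N / ∏ i ∈ T, s i : ℕ) : ℝ) * ∏ k ∈ T, ∑ l, h k l := by
  classical
  have hL : ∀ r, ∏ k ∈ T, h k (D r k) = ∏ k : T, h k.1 (D r k.1) := by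
    intro r
    exact (Finset.prod_attach T fun k => h k (D r k)).symm
  have hR : ∑ z : (∀ k : T, Fin (s k.1)), ∏ k : T, h k.1 (z k)
      = ∏ k : T, ∑ l, h k.1 l := by
    rw [Finset.prod_univ_sum (fun k : T => (Finset.univ : Finset (Fin (s k.1))))
      (fun k l => h k.1 l), ← Fintype.piFinset_univ]
  have hR2 : ∏ k : T, ∑ l, h k.1 l = ∏ k ∈ T, ∑ l, h k l :=
    Finset.prod_attach T fun k => ∑ l, h k l
  simp only [hL]
  rw [← hR2, ← hR]
  exact sum_runs hs D hD hn T hT (fun z => ∏ k : T, h k.1 (z k))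

lemma rho_mul (hs : ∀ i, 2 ≤ s i) (D : Fin N → ∀ i, Fin (s i)) {t : ℕ} (hD : hasStrength s D t) (hn : t ≤ n)
    (T : Finset (Fin n)) (hT : T.card ≤ t) :
    ((N / ∏ i ∈ T, s i : ℕ) : ℝ) * ∏ i ∈ T, (s i : ℝ) = N := by
  have := sum_prod_eq hs D hD hn T hT (fun k l => (1 : ℝ))
  simpa using this.symm

lemma colsum_zero (hs : ∀ i, 2 ≤ s i) (D : Fin N → ∀ i, Fin (s i))
    (C : ∀ i, Fin (s i) → Fin (s i - 1) → ℝ) (hC : ∀ i, isNOC (C i)) {t : ℕ} (hD : hasStrength s D t) (hn : t ≤ n)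
    (S : Finset (Fin n)) (hcard : S.card ≤ t) (hne : S.Nonempty) (J : ∀ k, Fin (s k - 1)) :
    ∑ r, pcol C D J S r = 0 := by
  unfold pcol
  rw [sum_prod_eq hs D hD hn S hcard (fun k l => C k l (J k))]
  obtain ⟨k, hk⟩ := hne
  exact mul_eq_zero_of_right _ (Finset.prod_eq_zero hk ((hC k).1 (J k)))

lemma ip_ne (hs : ∀ i, 2 ≤ s i) (D : Fin N → ∀ i, Fin (s i))
    (C : ∀ i, Fin (s i) → Fin (s i - 1) → ℝ) (hC : ∀ i, isNOC (C i)) {t : ℕ} (hD : hasStrength s D t) (hn : t ≤ n)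
    (S S' : Finset (Fin n)) (hcard : (S ∪ S').card ≤ t) (hne : S ≠ S')
    (J J' : ∀ k, Fin (s k - 1)) :
    ∑ r, pcol C D J S r * pcol C D J' S' r = 0 := by
  classical
  have hprod : ∀ r, pcol C D J S r * pcol C D J' S' r
      = ∏ k ∈ S ∪ S', (if k ∈ S then C k (D r k) (J k) else 1)
        * (if k ∈ S' then C k (D r k) (J' k) else 1) := by
    intro r
    rw [Finset.prod_mul_distrib, Finset.prod_ite_mem (S ∪ S') S,
      Finset.prod_ite_mem (S ∪ S') S', Finset.union_inter_cancel_left,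
      Finset.union_inter_cancel_right]
    rfl
  simp only [hprod]
  rw [sum_prod_eq hs D hD hn (S ∪ S') hcard
    (fun k l => (if k ∈ S then C k l (J k) else 1) * (if k ∈ S' then C k l (J' k) else 1))]
  have : ∃ k, (k ∈ S ∧ k ∉ S') ∨ (k ∈ S' ∧ k ∉ S) := by
    by_cases hss : S ⊆ S'
    · have h2 : ¬ S' ⊆ S := fun h => hne (Finset.Subset.antisymm hss h)
      obtain ⟨k, hk1, hk2⟩ := Finset.not_subset.mp h2
      exact ⟨k, Or.inr ⟨hk1, hk2⟩⟩
    · obtain ⟨k, hk1, hk2⟩ := Finset.not_subset.mp hss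
      exact ⟨k, Or.inl ⟨hk1, hk2⟩⟩
  obtain ⟨k, hk | hk⟩ := this
  · refine mul_eq_zero_of_right _ (Finset.prod_eq_zero (Finset.mem_union_left S' hk.1) ?_)
    simp only [if_pos hk.1, if_neg hk.2, mul_one]
    exact (hC k).1 (J k)
  · refine mul_eq_zero_of_right _ (Finset.prod_eq_zero (Finset.mem_union_right S hk.1) ?_)
    simp only [if_pos hk.1, if_neg hk.2, one_mul]
    exact (hC k).1 (J' k)

lemma ip_self (hs : ∀ i, 2 ≤ s i) (D : Fin N → ∀ i, Fin (s i))
    (C : ∀ i, Fin (s i) → Fin (s i - 1) → ℝ) (hC : ∀ i, isNOC (C i)) {t : ℕ} (hD : hasStrength s D t) (hn : t ≤ n)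
    (S : Finset (Fin n)) (hcard : S.card ≤ t) (J J' : ∀ k, Fin (s k - 1)) :
    ∑ r, pcol C D J S r * pcol C D J' S r
      = if (∀ k ∈ S, J k = J' k) then (N : ℝ) else 0 := by
  classical
  have hprod : ∀ r, pcol C D J S r * pcol C D J' S r
      = ∏ k ∈ S, C k (D r k) (J k) * C k (D r k) (J' k) := by
    intro r
    unfold pcol
    rw [← Finset.prod_mul_distrib]
  simp only [hprod]
  rw [sum_prod_eq hs D hD hn S hcard (fun k l => C k l (J k) * C k l (J' k))]
  by_cases hJJ : ∀ k ∈ S, J k = J' k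
  · rw [if_pos hJJ]
    have : ∀ k ∈ S, ∑ l, C k l (J k) * C k l (J' k) = (s k : ℝ) := by
      intro k hk
      rw [(hC k).2 (J k) (J' k), if_pos (hJJ k hk)]
    rw [Finset.prod_congr rfl this]
    exact rho_mul hs D hD hn S hcard
  · rw [if_neg hJJ]
    push_neg at hJJ
    obtain ⟨k, hk, hkne⟩ := hJJ
    refine mul_eq_zero_of_right _ (Finset.prod_eq_zero hk ?_)
    rw [(hC k).2 (J k) (J' k), if_neg hkne]

end AuxStatement3c

section AuxStatement3d
variable {N n : ℕ} {s : Fin n → ℕ}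

/-- Index type for the columns of the full model matrix of `E`. -/
abbrev Idx (s : Fin n → ℕ) (E : Finset (Fin n)) : Type _ :=
  Option ((S : {S : Finset (Fin n) // S ⊆ E ∧ S.Nonempty}) × (∀ k : S.1, Fin (s k.1 - 1)))

/-- The columns of the full model matrix of `E`, as an indexed family. -/
def vfam (C : ∀ i, Fin (s i) → Fin (s i - 1) → ℝ) (D : Fin N → ∀ i, Fin (s i))
    (E : Finset (Fin n)) : Idx s E → (Fin N → ℝ) :=
  fun a => Option.elim a (fun _ => 1) (fun p r => intCol C D p.1.1 p.2 r)

lemma vfam_none (C : ∀ i, Fin (s i) → Fin (s i - 1) → ℝ) (D : Fin N → ∀ i, Fin (s i))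
    (E : Finset (Fin n)) : vfam C D E none = fun _ => 1 := rfl

lemma vfam_some (C : ∀ i, Fin (s i) → Fin (s i - 1) → ℝ) (D : Fin N → ∀ i, Fin (s i))
    (E : Finset (Fin n))
    (p : (S : {S : Finset (Fin n) // S ⊆ E ∧ S.Nonempty}) × (∀ k : S.1, Fin (s k.1 - 1))) :
    vfam C D E (some p) = fun r => intCol C D p.1.1 p.2 r := rfl

lemma fullCols_eq_range (C : ∀ i, Fin (s i) → Fin (s i - 1) → ℝ)
    (D : Fin N → ∀ i, Fin (s i)) (E : Finset (Fin n)) :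
    fullCols C D E = Set.range (vfam C D E) := by
  ext f
  constructor
  · rintro (rfl | ⟨S, hSE, hSne, t, rfl⟩)
    · exact ⟨none, rfl⟩
    · exact ⟨some ⟨⟨S, hSE, hSne⟩, t⟩, rfl⟩
  · rintro ⟨a, rfl⟩
    cases a with
    | none => exact Set.mem_union_left _ rfl
    | some p => exact Set.mem_union_right _ ⟨p.1.1, p.1.2.1, p.1.2.2, p.2, rfl⟩

end AuxStatement3d

lemma conf_iff {N n R : ℕ} (hN : 1 ≤ N) (hR : 2 ≤ R) (hn : R ≤ n)
    {s : Fin n → ℕ} (hs : ∀ i, 2 ≤ s i)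
    (D : Fin N → ∀ i, Fin (s i)) (hD : hasStrength s D (R - 1))
    (C : ∀ i, Fin (s i) → Fin (s i - 1) → ℝ) (hC : ∀ i, isNOC (C i))
    (U : Finset (Fin n)) (hU : U.card = R) (i : Fin n) (hi : i ∈ U) :
    confounded C D i (U.erase i) ↔
      (∑ u : ∀ k : U, Fin (s k.1 - 1), (∑ r, intCol C D U u r) ^ 2)
        = (N : ℝ) ^ 2 * ((s i : ℝ) - 1) := by
  classical
  have hnR : R - 1 ≤ n := by omega
  have hNpos : (0 : ℝ) < N := by exact_mod_cast hN
  have hNne : (N : ℝ) ≠ 0 := ne_of_gt hNpos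
  set E := U.erase i with hEdef
  have hiE : i ∉ E := Finset.notMem_erase i U
  have hEcard : E.card = R - 1 := by rw [hEdef, Finset.card_erase_of_mem hi, hU]
  have hEne : E.Nonempty := Finset.card_pos.mp (by omega)
  have hEU : insert i E = U := Finset.insert_erase hi
  have hEsub : E ⊆ U := Finset.erase_subset i U
  have hEle : E.card ≤ R - 1 := le_of_eq hEcard
  set g : Fin (s i - 1) → (∀ k : E, Fin (s k.1 - 1)) → ℝ :=
    fun j t => ∑ r, C i (D r i) j * intCol C D E t r with hgdef
  have hsing : ({i} : Finset (Fin n)).card ≤ R - 1 := by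
    rw [Finset.card_singleton]; omega
  -- ⟨x_j, x_j⟩ = N
  have h_xx : ∀ j : Fin (s i - 1), ∑ r, C i (D r i) j * C i (D r i) j = (N : ℝ) := by
    intro j
    set J : ∀ k, Fin (s k - 1) :=
      Function.update (fun k => (⟨0, by have := hs k; omega⟩ : Fin (s k - 1))) i j with hJ
    have hJi : J i = j := by rw [hJ]; simp
    have h1 := sum_prod_eq hs D hD hnR {i} hsing (fun k l => C k l (J k) * C k l (J k))
    have h2 := rho_mul hs D hD hnR {i} hsing
    simp only [Finset.prod_singleton, hJi] at h1 h2
    rw [h1, (hC i).2 j j, if_pos rfl]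
    exact h2
  -- ⟨x_j, 1⟩ = 0
  have h_x1 : ∀ j : Fin (s i - 1), ∑ r, C i (D r i) j = 0 := by
    intro j
    set J : ∀ k, Fin (s k - 1) :=
      Function.update (fun k => (⟨0, by have := hs k; omega⟩ : Fin (s k - 1))) i j with hJ
    have hJi : J i = j := by rw [hJ]; simp
    have h1 := sum_prod_eq hs D hD hnR {i} hsing (fun k l => C k l (J k))
    simp only [Finset.prod_singleton, hJi] at h1
    rw [h1, (hC i).1 j, mul_zero]
  -- rewriting cross inner products through `pcol` over `insert i S`
  have hxcol : ∀ (j : Fin (s i - 1)) (S : Finset (Fin n)), S ⊆ E →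
      ∀ t : (∀ k : S, Fin (s k.1 - 1)),
      ∑ r, C i (D r i) j * intCol C D S t r
        = ∑ r, pcol C D (Function.update (extT hs S t) i j) (insert i S) r := by
    intro j S hSE t
    have hiS : i ∉ S := fun h => hiE (hSE h)
    apply Finset.sum_congr rfl
    intro r _
    rw [pcol, Finset.prod_insert hiS, Function.update_self]
    congr 1
    rw [intCol_pcol hs D C S t r, pcol]
    apply Finset.prod_congr rfl
    intro k hk
    rw [Function.update_of_ne (fun hki : k = i => hiS (hki ▸ hk))]
  -- cross inner products with strictly smaller subsets vanish
  have hxcol0 : ∀ (j : Fin (s i - 1)) (S : Finset (Fin n)) (hSE : S ⊆ E), S ≠ E →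
      ∀ t : (∀ k : S, Fin (s k.1 - 1)),
      ∑ r, C i (D r i) j * intCol C D S t r = 0 := by
    intro j S hSE hSneE t
    rw [hxcol j S hSE t]
    have hiS : i ∉ S := fun h => hiE (hSE h)
    have hcard : (insert i S).card ≤ R - 1 := by
      rw [Finset.card_insert_of_notMem hiS]
      have hlt : S.card < E.card := Finset.card_lt_card (hSE.ssubset_of_ne hSneE)
      omega
    exact colsum_zero hs D C hC hD hnR _ hcard (Finset.insert_nonempty i S) _
  -- g as a column sum over U
  have h_gU : ∀ (j : Fin (s i - 1)) (t : ∀ k : E, Fin (s k.1 - 1)),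
      g j t = ∑ r, pcol C D (Function.update (extT hs E t) i j) U r := by
    intro j t
    simp only [hgdef]
    rw [hxcol j E (Finset.Subset.refl E) t, hEU]
  -- orthogonality of the top columns
  have h_colcol : ∀ t t' : (∀ k : E, Fin (s k.1 - 1)),
      ∑ r, intCol C D E t r * intCol C D E t' r = if t = t' then (N : ℝ) else 0 := by
    intro t t'
    have h1 : ∀ r, intCol C D E t r * intCol C D E t' r
        = pcol C D (extT hs E t) E r * pcol C D (extT hs E t') E r := fun r => by
      rw [intCol_pcol hs D C, intCol_pcol hs D C]
    rw [Finset.sum_congr rfl (fun r _ => h1 r),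
      ip_self hs D C hC hD hnR E hEle (extT hs E t) (extT hs E t')]
    have hiff : (∀ k ∈ E, extT hs E t k = extT hs E t' k) ↔ t = t' := by
      constructor
      · intro h
        funext k
        have hk := h k.1 k.2
        simp only [extT, dif_pos k.2] at hk
        exact hk
      · rintro rfl k _
        rfl
    rw [if_congr hiff rfl rfl]
  -- splitting the sum over tuples on U
  have hQsplit : (∑ u : ∀ k : U, Fin (s k.1 - 1), (∑ r, intCol C D U u r) ^ 2)
      = ∑ j : Fin (s i - 1), ∑ t : (∀ k : E, Fin (s k.1 - 1)), (g j t) ^ 2 := by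
    set φ : (Fin (s i - 1) × ∀ k : E, Fin (s k.1 - 1)) → (∀ k : U, Fin (s k.1 - 1)) :=
      fun p k => Function.update (extT hs E p.2) i p.1 k.1 with hφ
    have hφbij : Function.Bijective φ := by
      constructor
      · intro p q h
        have h' : ∀ k : U, Function.update (extT hs E p.2) i p.1 k.1
            = Function.update (extT hs E q.2) i q.1 k.1 := fun k => congrFun h k
        refine Prod.ext ?_ ?_
        · have h1 := h' ⟨i, hi⟩
          simpa using h1
        · funext k
          have hk := h' ⟨k.1, hEsub k.2⟩
          have hki : (k.1 : Fin n) ≠ i := Finset.ne_of_mem_erase k.2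
          rw [Function.update_of_ne hki, Function.update_of_ne hki] at hk
          simp only [extT, dif_pos k.2] at hk
          exact hk
      · intro u
        refine ⟨⟨u ⟨i, hi⟩, fun k => u ⟨k.1, hEsub k.2⟩⟩, ?_⟩
        funext k
        by_cases hk : (k.1 : Fin n) = i
        · have hkeq : k = ⟨i, hi⟩ := Subtype.ext hk
          subst hkeq
          simp [hφ]
        · simp only [hφ]
          rw [Function.update_of_ne hk]
          simp only [extT, dif_pos (Finset.mem_erase.mpr ⟨hk, k.2⟩)]
          exact dif_pos (show (k.1 : Fin n) ∈ E from Finset.mem_erase.mpr ⟨hk, k.2⟩)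
    have hcongr : ∀ p : (Fin (s i - 1) × ∀ k : E, Fin (s k.1 - 1)),
        (∑ r, intCol C D U (φ p) r) = g p.1 p.2 := by
      intro p
      rw [h_gU p.1 p.2]
      apply Finset.sum_congr rfl
      intro r _
      rw [intCol_pcol hs D C U _ r]
      unfold pcol
      apply Finset.prod_congr rfl
      intro k hk
      simp only [extT, dif_pos hk, hφ]
    refine (Fintype.sum_bijective φ hφbij
      (fun p => (∑ r, intCol C D U (φ p) r) ^ 2)
      (fun u => (∑ r, intCol C D U u r) ^ 2) (fun p => rfl)).symm.trans ?_
    rw [Fintype.sum_prod_type]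
    exact Finset.sum_congr rfl fun j _ => Finset.sum_congr rfl fun t _ => by rw [hcongr ⟨j, t⟩]
  -- reduction of sums over the column index type
  have hred : ∀ (F : Idx s E → ℝ), F none = 0 →
      (∀ (S : {S : Finset (Fin n) // S ⊆ E ∧ S.Nonempty}) (t : ∀ k : S.1, Fin (s k.1 - 1)),
        S.1 ≠ E → F (some ⟨S, t⟩) = 0) →
      ∑ a, F a = ∑ t : (∀ k : E, Fin (s k.1 - 1)),
        F (some ⟨⟨E, Finset.Subset.refl E, hEne⟩, t⟩) := by
    intro F h0 hS
    rw [Fintype.sum_option, h0, zero_add, ← Finset.univ_sigma_univ, Finset.sum_sigma]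
    refine Finset.sum_eq_single (⟨E, Finset.Subset.refl E, hEne⟩ :
        {S : Finset (Fin n) // S ⊆ E ∧ S.Nonempty}) ?_ ?_
    · intro b _ hb
      refine Finset.sum_eq_zero fun t _ => hS b t fun h => hb (Subtype.ext h)
    · intro h
      exact absurd (Finset.mem_univ _) h
  have hswap2 : ∀ (y : Fin N → ℝ) (a : (∀ k : E, Fin (s k.1 - 1)) → ℝ),
      ∑ r, y r * (∑ t : (∀ k : E, Fin (s k.1 - 1)), a t * intCol C D E t r)
        = ∑ t : (∀ k : E, Fin (s k.1 - 1)), a t * ∑ r, y r * intCol C D E t r := by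
    intro y a
    calc ∑ r, y r * ∑ t : (∀ k : E, Fin (s k.1 - 1)), a t * intCol C D E t r
        = ∑ r, ∑ t : (∀ k : E, Fin (s k.1 - 1)), a t * (y r * intCol C D E t r) := by
          refine Finset.sum_congr rfl fun r _ => ?_
          rw [Finset.mul_sum]
          exact Finset.sum_congr rfl fun t _ => by ring
      _ = ∑ t : (∀ k : E, Fin (s k.1 - 1)), ∑ r, a t * (y r * intCol C D E t r) :=
          Finset.sum_comm
      _ = ∑ t : (∀ k : E, Fin (s k.1 - 1)), a t * ∑ r, y r * intCol C D E t r := by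
          refine Finset.sum_congr rfl fun t _ => ?_
          rw [Finset.mul_sum]
  have hgt : ∀ (j : Fin (s i - 1)) (t : ∀ k : E, Fin (s k.1 - 1)),
      ∑ r, C i (D r i) j * intCol C D E t r = g j t := fun j t => by
    simp only [hgdef]
  -- the key identity: N - B j / N = ‖x_j - w_j‖²
  have hkey : ∀ j : Fin (s i - 1),
      (N : ℝ) - (∑ t : (∀ k : E, Fin (s k.1 - 1)), g j t ^ 2) / N
        = ∑ r, (C i (D r i) j - ∑ t : (∀ k : E, Fin (s k.1 - 1)),
            (g j t / N) * intCol C D E t r) ^ 2 := by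
    intro j
    have hxw : ∑ r, C i (D r i) j * (∑ t : (∀ k : E, Fin (s k.1 - 1)),
        (g j t / N) * intCol C D E t r) = (∑ t : (∀ k : E, Fin (s k.1 - 1)), g j t ^ 2) / N := by
      rw [hswap2 (fun r => C i (D r i) j) (fun t => g j t / N), Finset.sum_div]
      refine Finset.sum_congr rfl fun t _ => ?_
      rw [hgt j t]
      ring
    have hcolw : ∀ t : (∀ k : E, Fin (s k.1 - 1)),
        ∑ r, intCol C D E t r * (∑ t' : (∀ k : E, Fin (s k.1 - 1)),
          (g j t' / N) * intCol C D E t' r) = g j t := by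
      intro t
      rw [hswap2 (fun r => intCol C D E t r) (fun t' => g j t' / N)]
      rw [Finset.sum_eq_single t]
      · rw [h_colcol t t, if_pos rfl]
        field_simp
      · intro t' _ ht'
        rw [h_colcol t t', if_neg fun h => ht' h.symm, mul_zero]
      · intro h
        exact absurd (Finset.mem_univ t) h
    have hww : ∑ r, (∑ t : (∀ k : E, Fin (s k.1 - 1)), (g j t / N) * intCol C D E t r)
        * (∑ t' : (∀ k : E, Fin (s k.1 - 1)), (g j t' / N) * intCol C D E t' r)
        = (∑ t : (∀ k : E, Fin (s k.1 - 1)), g j t ^ 2) / N := by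
      rw [hswap2 (fun r => ∑ t : (∀ k : E, Fin (s k.1 - 1)), (g j t / N) * intCol C D E t r)
        (fun t' => g j t' / N), Finset.sum_div]
      refine Finset.sum_congr rfl fun t' _ => ?_
      have h4 : ∑ r, (∑ t : (∀ k : E, Fin (s k.1 - 1)), (g j t / N) * intCol C D E t r)
          * intCol C D E t' r = g j t' := by
        rw [← hcolw t']
        exact Finset.sum_congr rfl fun r _ => by ring
      rw [h4]
      ring
    have hexp : ∀ r, (C i (D r i) j - ∑ t : (∀ k : E, Fin (s k.1 - 1)),
        (g j t / N) * intCol C D E t r) ^ 2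
        = C i (D r i) j * C i (D r i) j
          - 2 * (C i (D r i) j * (∑ t : (∀ k : E, Fin (s k.1 - 1)),
              (g j t / N) * intCol C D E t r))
          + (∑ t : (∀ k : E, Fin (s k.1 - 1)), (g j t / N) * intCol C D E t r)
            * (∑ t' : (∀ k : E, Fin (s k.1 - 1)), (g j t' / N) * intCol C D E t' r) :=
      fun r => by ring
    rw [Finset.sum_congr rfl fun r _ => hexp r, Finset.sum_add_distrib,
      Finset.sum_sub_distrib, h_xx j, ← Finset.mul_sum, hxw, hww]
    ring
  -- confounded iff each B j = N²
  have hconfB : confounded C D i E ↔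
      ∀ j : Fin (s i - 1), (∑ t : (∀ k : E, Fin (s k.1 - 1)), g j t ^ 2) = N * N := by
    have hcol1 : ∀ t : (∀ k : E, Fin (s k.1 - 1)), ∑ r, intCol C D E t r = 0 := by
      intro t
      rw [Finset.sum_congr rfl fun r _ => intCol_pcol hs D C E t r]
      exact colsum_zero hs D C hC hD hnR E hEle hEne _
    have hipne : ∀ (S : {S : Finset (Fin n) // S ⊆ E ∧ S.Nonempty})
        (t : ∀ k : E, Fin (s k.1 - 1)) (t' : ∀ k : S.1, Fin (s k.1 - 1)), S.1 ≠ E →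
        ∑ r, intCol C D E t r * intCol C D S.1 t' r = 0 := by
      intro S t t' hSne
      have hunion : (E ∪ S.1).card ≤ R - 1 := by
        rw [Finset.union_eq_left.mpr S.2.1]
        exact hEle
      rw [Finset.sum_congr rfl fun r _ => by
        rw [intCol_pcol hs D C E t r, intCol_pcol hs D C S.1 t' r]]
      exact ip_ne hs D C hC hD hnR E S.1 hunion (fun h => hSne h.symm) _ _
    constructor
    · intro hconf j
      have hx := hconf j
      rw [fullCols_eq_range C D E] at hx
      obtain ⟨c, hc⟩ := (Submodule.mem_span_range_iff_exists_fun ℝ).mp hx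
      have hcr : ∀ r, ∑ a : Idx s E, c a * vfam C D E a r = C i (D r i) j := by
        intro r
        have h1 := congrFun hc r
        simpa using h1
      have hswap3 : ∀ y : Fin N → ℝ,
          ∑ r, y r * C i (D r i) j = ∑ a : Idx s E, c a * ∑ r, y r * vfam C D E a r := by
        intro y
        calc ∑ r, y r * C i (D r i) j
            = ∑ r, ∑ a : Idx s E, c a * (y r * vfam C D E a r) := by
              refine Finset.sum_congr rfl fun r _ => ?_
              rw [← hcr r, Finset.mul_sum]
              exact Finset.sum_congr rfl fun a _ => by ring
          _ = ∑ a : Idx s E, ∑ r, c a * (y r * vfam C D E a r) := Finset.sum_comm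
          _ = _ := Finset.sum_congr rfl fun a _ => by rw [Finset.mul_sum]
      set aE : (∀ k : E, Fin (s k.1 - 1)) → Idx s E :=
        fun t => some ⟨⟨E, Finset.Subset.refl E, hEne⟩, t⟩ with haE
      have hcoef : ∀ t : (∀ k : E, Fin (s k.1 - 1)), g j t = c (aE t) * N := by
        intro t
        have h1 : g j t = ∑ r, intCol C D E t r * C i (D r i) j := by
          simp only [hgdef]
          exact Finset.sum_congr rfl fun r _ => by ring
        rw [h1, hswap3 (fun r => intCol C D E t r)]
        rw [hred (fun a => c a * ∑ r, intCol C D E t r * vfam C D E a r) ?_ ?_]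
        · rw [Finset.sum_congr rfl fun t' _ => by
            rw [show ∑ r, intCol C D E t r * vfam C D E
                (some ⟨⟨E, Finset.Subset.refl E, hEne⟩, t'⟩) r
              = if t = t' then (N:ℝ) else 0 from h_colcol t t']]
          rw [Finset.sum_eq_single t]
          · rw [if_pos rfl, haE]
          · intro t' _ ht'
            rw [if_neg fun h => ht' h.symm, mul_zero]
          · intro h
            exact absurd (Finset.mem_univ t) h
        · simp only [vfam_none, mul_one]
          rw [hcol1 t, mul_zero]
        · intro S t' hSne
          simp only [vfam_some]
          rw [hipne S t t' hSne, mul_zero]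
      have hNeq : (N:ℝ) = ∑ t : (∀ k : E, Fin (s k.1 - 1)), c (aE t) * g j t := by
        have h1 : (N:ℝ) = ∑ r, C i (D r i) j * C i (D r i) j := (h_xx j).symm
        rw [hswap3 (fun r => C i (D r i) j)] at h1
        rw [hred (fun a => c a * ∑ r, C i (D r i) j * vfam C D E a r) ?_ ?_] at h1
        · rw [h1]
          refine Finset.sum_congr rfl fun t _ => ?_
          simp only [haE, vfam_some, hgdef]
        · simp only [vfam_none, mul_one]
          rw [h_x1 j, mul_zero]
        · intro S t' hSne
          simp only [vfam_some]
          rw [hxcol0 j S.1 S.2.1 (fun h => hSne h) t', mul_zero]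
      have h2 : (∑ t : (∀ k : E, Fin (s k.1 - 1)), g j t ^ 2) / N = (N:ℝ) := by
        rw [Finset.sum_div]
        have h5 : ∀ t : (∀ k : E, Fin (s k.1 - 1)), g j t ^ 2 / N = c (aE t) * g j t := by
          intro t
          have h3 : c (aE t) = g j t / N := by
            rw [eq_div_iff hNne]
            exact (hcoef t).symm
          rw [h3]
          ring
        rw [Finset.sum_congr rfl fun t _ => h5 t]
        exact hNeq.symm
      rw [div_eq_iff hNne] at h2
      exact h2
    · intro hB j
      have h0 : ∑ r, (C i (D r i) j - ∑ t : (∀ k : E, Fin (s k.1 - 1)),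
          (g j t / N) * intCol C D E t r) ^ 2 = 0 := by
        rw [← hkey j, hB j]
        field_simp
        ring
      have hptw : ∀ r, C i (D r i) j = ∑ t : (∀ k : E, Fin (s k.1 - 1)),
          (g j t / N) * intCol C D E t r := by
        intro r
        have h1 := (Finset.sum_eq_zero_iff_of_nonneg
          (fun r _ => sq_nonneg _)).mp h0 r (Finset.mem_univ r)
        have h2 := (pow_eq_zero_iff two_ne_zero).mp h1
        linarith [h2]
      have hfun : (fun r => C i (D r i) j)
          = ∑ t : (∀ k : E, Fin (s k.1 - 1)),
              (g j t / N) • (fun r => intCol C D E t r) := by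
        funext r
        rw [hptw r, Finset.sum_apply]
        exact Finset.sum_congr rfl fun t _ => rfl
      rw [hfun]
      refine Submodule.sum_mem _ fun t _ => Submodule.smul_mem _ _ ?_
      apply Submodule.subset_span
      exact Set.mem_union_right _ ⟨E, Finset.Subset.refl E, hEne, t, rfl⟩
  -- Bessel bound
  have hBle : ∀ j : Fin (s i - 1),
      (∑ t : (∀ k : E, Fin (s k.1 - 1)), g j t ^ 2) ≤ N * N := by
    intro j
    have hpos : (0:ℝ) ≤ ∑ r, (C i (D r i) j - ∑ t : (∀ k : E, Fin (s k.1 - 1)),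
        (g j t / N) * intCol C D E t r) ^ 2 := Finset.sum_nonneg fun r _ => sq_nonneg _
    rw [← hkey j] at hpos
    have h2 := (div_le_iff₀ hNpos).mp (by linarith :
      (∑ t : (∀ k : E, Fin (s k.1 - 1)), g j t ^ 2) / N ≤ (N:ℝ))
    linarith
  rw [hQsplit, hconfB]
  constructor
  · intro h
    rw [Finset.sum_congr rfl (fun j _ => h j), Finset.sum_const, Finset.card_univ,
      Fintype.card_fin, nsmul_eq_mul]
    have hcast : ((s i - 1 : ℕ) : ℝ) = (s i : ℝ) - 1 := by
      have := hs i
      push_cast [Nat.cast_sub (by omega : 1 ≤ s i)]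
      ring
    rw [hcast]
    ring
  · intro h j
    by_contra hj
    have hlt : (∑ t : (∀ k : E, Fin (s k.1 - 1)), g j t ^ 2) < N * N :=
      lt_of_le_of_ne (hBle j) hj
    have hsum_lt : (∑ j : Fin (s i - 1), ∑ t : (∀ k : E, Fin (s k.1 - 1)), g j t ^ 2)
        < ∑ _j : Fin (s i - 1), (N : ℝ) * N :=
      Finset.sum_lt_sum (fun j _ => hBle j) ⟨j, Finset.mem_univ j, hlt⟩
    rw [Finset.sum_const, Finset.card_univ, Fintype.card_fin, nsmul_eq_mul, h] at hsum_lt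
    have hcast : ((s i - 1 : ℕ) : ℝ) = (s i : ℝ) - 1 := by
      have := hs i
      push_cast [Nat.cast_sub (by omega : 1 ≤ s i)]
      ring
    rw [hcast] at hsum_lt
    nlinarith [hsum_lt]


/-- if `i, j ∈ U` both attain the minimum number of levels `s_min` in `U`,
then `i` is completely confounded by `U \ {i}` iff `j` is completely confounded by
`U \ {j}`. -/
theorem statement3 {N n R : ℕ} (hN : 1 ≤ N) (hR : 2 ≤ R) (hn : R ≤ n)
    {s : Fin n → ℕ} (hs : ∀ i, 2 ≤ s i)
    (D : Fin N → ∀ i, Fin (s i)) (hD : hasStrength s D (R - 1))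
    (C : ∀ i, Fin (s i) → Fin (s i - 1) → ℝ) (hC : ∀ i, isNOC (C i))
    (U : Finset (Fin n)) (hU : U.card = R) (i j : Fin n) (hi : i ∈ U) (hj : j ∈ U)
    (hsi : ∀ k ∈ U, s i ≤ s k) (hsj : ∀ k ∈ U, s j ≤ s k) :
    confounded C D i (U.erase i) ↔ confounded C D j (U.erase j) := by
  have hsij : s i = s j := le_antisymm (hsi j hj) (hsj i hi)
  rw [conf_iff hN hR hn hs D hD C hC U hU i hi, conf_iff hN hR hn hs D hD C hC U hU j hj,
    hsij]
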